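/- arXiv:1311.7586 — 2 statements merged into one kernel-verified Lean document; each statement's English description precedes it below -/
import Mathlib

section
/- Let (Z,d) be a proper geodesic CAT(0) space and let F be a set of geodesic lines of Z (up to reparametrization) that is closed for the geodesic topology. Then the support of F, i.e. the union of the images of the elements of F, is a closed subset of Z. -/
open Metric

/-- `f : ℝ → Z` is a (parametrized) geodesic line: an isometric embedding of `ℝ`. -/
def IsGeodesicLine {Z : Type*} [MetricSpace Z] (f : ℝ → Z) : Prop :=
  ∀ s t : ℝ, dist (f s) (f t) = |s - t|

/-- `Z` is a geodesic metric space: any two points are joined by a geodesic segment. -/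
def IsGeodesicSpace (Z : Type*) [MetricSpace Z] : Prop :=
  ∀ x y : Z, ∃ γ : ℝ → Z, γ 0 = x ∧ γ (dist x y) = y ∧
    ∀ s ∈ Set.Icc 0 (dist x y), ∀ t ∈ Set.Icc 0 (dist x y), dist (γ s) (γ t) = |s - t|

/-- `Z` is CAT(0): the CN-inequality of Bruhat–Tits holds for midpoints. -/
def IsCAT0 (Z : Type*) [MetricSpace Z] : Prop :=
  ∀ x y z m : Z, dist y m = dist y z / 2 → dist z m = dist y z / 2 →
    dist x m ^ 2 ≤ (dist x y ^ 2 + dist x z ^ 2) / 2 - dist y z ^ 2 / 4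

/-- Reparametrization (change of origin) of a continuous map `ℝ → Z` by translation. -/
noncomputable def translateMap {Z : Type*} [MetricSpace Z] (f : C(ℝ, Z)) (a : ℝ) :
    C(ℝ, Z) :=
  f.comp (Homeomorph.addRight a : C(ℝ, ℝ))

lemma geodesicSet_isCompact {Z : Type*} [MetricSpace Z] [ProperSpace Z] (x : Z) :
    IsCompact {g : C(ℝ, Z) | IsGeodesicLine g ∧ dist (g 0) x ≤ 1} := by
  apply ArzelaAscoli.isCompact_of_equicontinuous
  · have himg : ContinuousMap.toFun '' {g : C(ℝ, Z) | IsGeodesicLine g ∧ dist (g 0) x ≤ 1}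
        = {g : ℝ → Z | IsGeodesicLine g ∧ dist (g 0) x ≤ 1} := by
      ext g
      constructor
      · rintro ⟨f, hf, rfl⟩; exact hf
      · rintro ⟨hg, hg0⟩
        have hcont : Continuous g := by
          apply LipschitzWith.continuous (K := 1)
          intro s t
          rw [edist_dist, edist_dist, hg s t, Real.dist_eq]
          simp
        exact ⟨⟨g, hcont⟩, ⟨hg, hg0⟩, rfl⟩
    rw [himg]
    have hsub : {g : ℝ → Z | IsGeodesicLine g ∧ dist (g 0) x ≤ 1}
        ⊆ Set.pi Set.univ (fun t => closedBall x (1 + |t|)) := by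
      rintro g ⟨hg, hg0⟩ t _
      have : dist (g t) (g 0) = |t| := by simpa using hg t 0
      calc dist (g t) x ≤ dist (g t) (g 0) + dist (g 0) x := dist_triangle _ _ _
        _ ≤ |t| + 1 := by rw [this]; linarith
        _ = 1 + |t| := by ring
    have hclosed : IsClosed {g : ℝ → Z | IsGeodesicLine g ∧ dist (g 0) x ≤ 1} := by
      have h1 : IsClosed {g : ℝ → Z | IsGeodesicLine g} := by
        have he : {g : ℝ → Z | IsGeodesicLine g} =
            ⋂ (s : ℝ) (t : ℝ), {g : ℝ → Z | dist (g s) (g t) = |s - t|} := by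
          ext g; simp [IsGeodesicLine]
        rw [he]
        refine isClosed_iInter fun s => isClosed_iInter fun t => ?_
        exact isClosed_eq ((continuous_apply s).dist (continuous_apply t)) continuous_const
      have h2 : IsClosed {g : ℝ → Z | dist (g 0) x ≤ 1} :=
        isClosed_le ((continuous_apply 0).dist continuous_const) continuous_const
      exact h1.inter h2
    exact ((isCompact_univ_pi fun t => isCompact_closedBall x _).of_isClosed_subset
      hclosed hsub)
  · apply Metric.equicontinuous_of_continuity_modulus id Filter.tendsto_id
    rintro s t ⟨g, hg, -⟩
    simp only [Real.dist_eq, id]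
    exact le_of_eq (hg s t)

/-- let `Z` be a proper geodesic CAT(0) space and `F` a set of geodesic
lines, invariant under change of origin (so that it represents a set of unparametrized
geodesics) and closed for the geodesic topology (equivalently, closed in the
compact-open topology as a translation-saturated set). Then the support of `F`,
the union of the images of its elements, is closed in `Z`. -/
theorem support_closed_of_closed_geodesic_family
    {Z : Type*} [MetricSpace Z] [ProperSpace Z]
    (hgeo : IsGeodesicSpace Z) (hcat : IsCAT0 Z)
    (F : Set C(ℝ, Z))
    (hF : ∀ f ∈ F, IsGeodesicLine f)
    (htrans : ∀ f ∈ F, ∀ a : ℝ, translateMap f a ∈ F)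
    (hclosed : IsClosed F) :
    IsClosed (⋃ f ∈ F, Set.range (f : ℝ → Z)) := by
  rw [← closure_subset_iff_isClosed]
  intro x hx
  set K := {g : C(ℝ, Z) | IsGeodesicLine g ∧ dist (g 0) x ≤ 1} with hKdef
  have hS : IsCompact (F ∩ K) := (geodesicSet_isCompact x).inter_left hclosed
  have hev : Continuous fun g : C(ℝ, Z) => g 0 := continuous_eval_const 0
  have hT : IsCompact ((fun g : C(ℝ, Z) => g 0) '' (F ∩ K)) := hS.image hev
  have hxT : x ∈ (fun g : C(ℝ, Z) => g 0) '' (F ∩ K) := by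
    rw [← hT.isClosed.closure_eq]
    rw [Metric.mem_closure_iff]
    intro ε hε
    obtain ⟨y, hy, hyd⟩ := Metric.mem_closure_iff.mp hx (min ε 1) (by positivity)
    simp only [Set.mem_iUnion] at hy
    obtain ⟨f, hfF, t, rfl⟩ := hy
    refine ⟨f t, ⟨translateMap f t, ⟨htrans f hfF t, ?_, ?_⟩, ?_⟩, ?_⟩
    · intro s u
      have hv : ∀ v : ℝ, (translateMap f t) v = f (v + t) := fun _ => rfl
      rw [hv s, hv u, hF f hfF (s + t) (u + t)]
      ring_nf
    · show dist (f (0 + t)) x ≤ 1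
      rw [zero_add, dist_comm]
      exact le_trans hyd.le (min_le_right _ _)
    · show f (0 + t) = f t
      rw [zero_add]
    · exact lt_of_lt_of_le hyd (min_le_left _ _)
  obtain ⟨g, ⟨hgF, _⟩, hg0⟩ := hxT
  exact Set.mem_iUnion₂.mpr ⟨g, hgF, ⟨0, hg0⟩⟩
end

section
/- Let T be a simplicial tree in which every vertex has finite valence ≥ 3, with a cyclic order or_x on the set of germs of rays at each vertex x. Define o : (∂∞T)³ → {−1,0,1} by o(a,b,c) = or_t(r_a,r_b,r_c) for pairwise distinct a,b,c, where t is the center of the tripod determined by a,b,c and r_a,r_b,r_c the germs at t of [t,a), [t,b), [t,c), and o(a,b,c) = 0 otherwise. Then o is a total cyclic order on ∂∞T. -/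
/-- `r` represents a germ of geodesic ray issued from `x`. -/
def IsRayFrom {X : Type*} [MetricSpace X] (x : X) (r : ℝ → X) : Prop :=
  r 0 = x ∧ ∃ ε > (0 : ℝ), ∀ s ∈ Set.Icc 0 ε, ∀ t ∈ Set.Icc 0 ε,
    dist (r s) (r t) = |s - t|

/-- Two ray representatives issued from `x` define the same germ if they coincide on
some initial interval. -/
def GermEq {X : Type*} [MetricSpace X] (x : X) (r r' : ℝ → X) : Prop :=
  ∃ ε > (0 : ℝ), ∀ s ∈ Set.Icc 0 ε, r s = r' s

/-- `r : ℝ → X` is a complete geodesic ray (isometric on `[0, +∞)`). -/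
def IsGeodesicRay {X : Type*} [MetricSpace X] (r : ℝ → X) : Prop :=
  ∀ s ≥ (0 : ℝ), ∀ t ≥ (0 : ℝ), dist (r s) (r t) = |s - t|

/-- Two geodesic rays are asymptotic (they define the same point at infinity). -/
def Asymptotic {X : Type*} [MetricSpace X] (r r' : ℝ → X) : Prop :=
  ∃ C : ℝ, ∀ t ≥ (0 : ℝ), dist (r t) (r' t) ≤ C

/-- A simplicial tree (as a metric space): a geodesic `ℝ`-tree with a discrete set of
vertices, every vertex of finite valence `≥ 3`, every non-vertex point of valence `2`,
and in which every germ of ray extends to a geodesic ray. -/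
structure SimplicialTreeSpace where
  space : Type
  [ms : MetricSpace space]
  /-- `space` is geodesic. -/
  geodesic : ∀ x y : space, ∃ γ : ℝ → space, γ 0 = x ∧ γ (dist x y) = y ∧
    ∀ s ∈ Set.Icc 0 (dist x y), ∀ t ∈ Set.Icc 0 (dist x y), dist (γ s) (γ t) = |s - t|
  /-- `space` is `0`-hyperbolic (four-point condition), hence an `ℝ`-tree. -/
  zero_hyperbolic : ∀ x y z w : space,
    dist x z + dist y w ≤ max (dist x y + dist z w) (dist x w + dist y z)
  vertices : Set space
  /-- Edge lengths are bounded below: vertices are uniformly separated. -/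
  edge_lengths_bounded_below : ∃ lambda > (0 : ℝ), ∀ x ∈ vertices, ∀ y ∈ vertices,
    x ≠ y → lambda ≤ dist x y
  /-- Non-vertex points have exactly two germs of rays. -/
  two_germs_off_vertices : ∀ x ∉ vertices, ∃ r r' : ℝ → space,
    IsRayFrom x r ∧ IsRayFrom x r' ∧ ¬ GermEq x r r' ∧
    ∀ r'' : ℝ → space, IsRayFrom x r'' → GermEq x r'' r ∨ GermEq x r'' r'
  /-- Every vertex has finite valence. -/
  germs_finite : ∀ x : space, ∃ Fx : Set (ℝ → space), Fx.Finite ∧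
    ∀ r : ℝ → space, IsRayFrom x r → ∃ r' ∈ Fx, GermEq x r r'
  /-- Every vertex has valence at least `3`. -/
  valence_ge_three : ∀ x ∈ vertices, ∃ r₁ r₂ r₃ : ℝ → space,
    IsRayFrom x r₁ ∧ IsRayFrom x r₂ ∧ IsRayFrom x r₃ ∧
    ¬ GermEq x r₁ r₂ ∧ ¬ GermEq x r₂ r₃ ∧ ¬ GermEq x r₁ r₃
  /-- Every germ of ray extends to a complete geodesic ray. -/
  germ_extends : ∀ (x : space) (r : ℝ → space), IsRayFrom x r →
    ∃ ρ : ℝ → space, IsGeodesicRay ρ ∧ ρ 0 = x ∧ GermEq x ρ r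

attribute [instance] SimplicialTreeSpace.ms

/-- The boundary at infinity of the tree: geodesic rays modulo the asymptotic
relation. -/
def SimplicialTreeSpace.Boundary (T : SimplicialTreeSpace) : Type :=
  Quot (fun r r' : {r : ℝ → T.space // IsGeodesicRay r} => Asymptotic r.1 r'.1)

/-- The point at infinity of a geodesic ray. -/
def SimplicialTreeSpace.atInfinity (T : SimplicialTreeSpace)
    (r : {r : ℝ → T.space // IsGeodesicRay r}) : T.Boundary :=
  Quot.mk _ r

/-- A cyclic orientation of the tree: a total cyclic order, invariant under germ
equivalence, on the germs of rays at each point. -/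
structure IsCyclicOrientation (T : SimplicialTreeSpace)
    (ord : T.space → (ℝ → T.space) → (ℝ → T.space) → (ℝ → T.space) → ℤ) : Prop where
  range : ∀ x r₁ r₂ r₃, ord x r₁ r₂ r₃ = -1 ∨ ord x r₁ r₂ r₃ = 0 ∨ ord x r₁ r₂ r₃ = 1
  germ_invariant : ∀ x r₁ r₂ r₃ r₁' r₂' r₃', GermEq x r₁ r₁' → GermEq x r₂ r₂' →
    GermEq x r₃ r₃' → ord x r₁ r₂ r₃ = ord x r₁' r₂' r₃'
  zero_iff : ∀ x r₁ r₂ r₃, IsRayFrom x r₁ → IsRayFrom x r₂ → IsRayFrom x r₃ →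
    (ord x r₁ r₂ r₃ = 0 ↔ GermEq x r₁ r₂ ∨ GermEq x r₂ r₃ ∨ GermEq x r₁ r₃)
  cyclic : ∀ x r₁ r₂ r₃, ord x r₁ r₂ r₃ = ord x r₂ r₃ r₁ ∧
    ord x r₁ r₂ r₃ = - ord x r₁ r₃ r₂
  trans : ∀ x r₁ r₂ r₃ r₄, IsRayFrom x r₁ → IsRayFrom x r₂ → IsRayFrom x r₃ →
    IsRayFrom x r₄ → ¬ GermEq x r₁ r₂ → ¬ GermEq x r₁ r₃ → ¬ GermEq x r₁ r₄ →
    ¬ GermEq x r₂ r₃ → ¬ GermEq x r₂ r₄ → ¬ GermEq x r₃ r₄ →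
    ord x r₁ r₂ r₃ = 1 → ord x r₁ r₃ r₄ = 1 → ord x r₁ r₂ r₄ = 1

/-- `o` is the cyclic order on the boundary at infinity induced by the cyclic
orientation `ord` of the tree: `o(a,b,c) = 0` if `a, b, c` are not pairwise distinct,
and otherwise `o(a,b,c) = ord_t(r_a, r_b, r_c)` where `t` is the center of the tripod
determined by `a, b, c` — characterized as the unique point from which rays `r_a, r_b,
r_c` towards `a, b, c` have pairwise distinct germs. -/
structure IsInducedBoundaryOrder (T : SimplicialTreeSpace)
    (ord : T.space → (ℝ → T.space) → (ℝ → T.space) → (ℝ → T.space) → ℤ)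
    (o : T.Boundary → T.Boundary → T.Boundary → ℤ) : Prop where
  eq_ord : ∀ (t : T.space) (ra rb rc : {r : ℝ → T.space // IsGeodesicRay r}),
    ra.1 0 = t → rb.1 0 = t → rc.1 0 = t →
    ¬ GermEq t ra.1 rb.1 → ¬ GermEq t rb.1 rc.1 → ¬ GermEq t ra.1 rc.1 →
    o (T.atInfinity ra) (T.atInfinity rb) (T.atInfinity rc) = ord t ra.1 rb.1 rc.1
  zero_of_not_distinct : ∀ a b c : T.Boundary, (a = b ∨ b = c ∨ a = c) → o a b c = 0

/-- A total cyclic order (with values in `{-1,0,1} ⊆ ℤ`). -/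
def IsTotalCyclicOrder {X : Type*} (o : X → X → X → ℤ) : Prop :=
  (∀ x y z : X, o x y z = -1 ∨ o x y z = 0 ∨ o x y z = 1) ∧
  (∀ x y z : X, o x y z = 0 ↔ ¬(x ≠ y ∧ y ≠ z ∧ x ≠ z)) ∧
  (∀ x y z : X, o x y z = o y z x ∧ o x y z = - o x z y) ∧
  (∀ x y z t : X, x ≠ y → x ≠ z → x ≠ t → y ≠ z → y ≠ t → z ≠ t →
    o x y z = 1 → o x z t = 1 → o x y t = 1)

section TreeLemmas

variable {T : SimplicialTreeSpace}

private lemma germEq_refl (t : T.space) (r : ℝ → T.space) : GermEq t r r :=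
  ⟨1, one_pos, fun _ _ => rfl⟩

private lemma germEq_symm {t : T.space} {r r' : ℝ → T.space} (h : GermEq t r r') :
    GermEq t r' r := by
  obtain ⟨ε, hε, h⟩ := h
  exact ⟨ε, hε, fun s hs => (h s hs).symm⟩

private lemma germEq_trans {t : T.space} {r r' r'' : ℝ → T.space} (h : GermEq t r r')
    (h' : GermEq t r' r'') : GermEq t r r'' := by
  obtain ⟨ε, hε, h⟩ := h
  obtain ⟨ε', hε', h'⟩ := h'
  refine ⟨min ε ε', lt_min hε hε', fun s hs => ?_⟩
  rw [h s ⟨hs.1, hs.2.trans (min_le_left _ _)⟩, h' s ⟨hs.1, hs.2.trans (min_le_right _ _)⟩]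

private lemma asymp_refl {X : Type*} [MetricSpace X] (r : ℝ → X) : Asymptotic r r :=
  ⟨0, fun t _ => by simp⟩

private lemma asymp_symm {X : Type*} [MetricSpace X] {r r' : ℝ → X} (h : Asymptotic r r') :
    Asymptotic r' r := by
  obtain ⟨C, hC⟩ := h
  exact ⟨C, fun t ht => by rw [dist_comm]; exact hC t ht⟩

private lemma asymp_trans {X : Type*} [MetricSpace X] {r r' r'' : ℝ → X}
    (h : Asymptotic r r') (h' : Asymptotic r' r'') : Asymptotic r r'' := by
  obtain ⟨C, hC⟩ := h
  obtain ⟨C', hC'⟩ := h'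
  refine ⟨C + C', fun t ht => ?_⟩
  calc dist (r t) (r'' t) ≤ dist (r t) (r' t) + dist (r' t) (r'' t) := dist_triangle _ _ _
    _ ≤ C + C' := add_le_add (hC t ht) (hC' t ht)

private lemma geo_dist {X : Type*} [MetricSpace X] {r : ℝ → X} (hr : IsGeodesicRay r)
    {s t : ℝ} (hs : 0 ≤ s) (hst : s ≤ t) : dist (r s) (r t) = t - s := by
  rw [hr s hs t (hs.trans hst), abs_sub_comm, abs_of_nonneg (by linarith)]

private lemma geo_dist0 {X : Type*} [MetricSpace X] {r : ℝ → X} (hr : IsGeodesicRay r)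
    {s : ℝ} (hs : 0 ≤ s) : dist (r 0) (r s) = s := by
  simpa using geo_dist hr le_rfl hs

private noncomputable def gp (p x y : T.space) : ℝ := (dist p x + dist p y - dist x y) / 2

private lemma gp_nonneg (p x y : T.space) : 0 ≤ gp p x y := by
  unfold gp
  have h := dist_triangle x p y
  have := dist_comm x p
  linarith

private lemma gp_le_left (p x y : T.space) : gp p x y ≤ dist p x := by
  unfold gp
  have := dist_triangle p x y
  linarith

private lemma gp_le_right (p x y : T.space) : gp p x y ≤ dist p y := by
  unfold gp
  have := dist_triangle p y x
  have := dist_comm y x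
  linarith

private lemma gp_ineq (p x y z : T.space) : min (gp p x y) (gp p y z) ≤ gp p x z := by
  have h := T.zero_hyperbolic x y z p
  have e1 := dist_comm y p
  have e3 := dist_comm x p
  have e2 := dist_comm z p
  rcases le_total (dist x y + dist z p) (dist x p + dist y z) with hc | hc
  · refine le_trans (min_le_right _ _) ?_
    rw [max_eq_right hc] at h
    unfold gp
    linarith
  · refine le_trans (min_le_left _ _) ?_
    rw [max_eq_left hc] at h
    unfold gp
    linarith

private lemma unique_between {x y z z' : T.space}
    (h : dist x z + dist z y = dist x y) (h1 : dist x z' = dist x z)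
    (h2 : dist z' y = dist z y) : z = z' := by
  have h4 := T.zero_hyperbolic z x z' y
  have hle : dist z z' ≤ 0 := by
    rcases max_cases (dist z x + dist z' y) (dist z y + dist x z') with ⟨he, _⟩ | ⟨he, _⟩ <;>
      rw [he] at h4 <;> (have := dist_comm z x; linarith)
  exact dist_le_zero.mp hle

private lemma ray_unique {p : T.space} {r r' : ℝ → T.space}
    (hr : IsGeodesicRay r) (hr' : IsGeodesicRay r') (h0 : r 0 = p) (h0' : r' 0 = p)
    {u : ℝ} (hu : 0 ≤ u) (huu : r u = r' u) :
    ∀ s, 0 ≤ s → s ≤ u → r s = r' s := by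
  intro s hs hsu
  refine unique_between (x := r 0) (y := r u) (z := r s) (z' := r' s) ?_ ?_ ?_
  · rw [geo_dist0 hr hs, geo_dist hr hs hsu, geo_dist0 hr hu]
    ring
  · rw [geo_dist0 hr hs, h0, ← h0', geo_dist0 hr' hs]
  · rw [geo_dist hr hs hsu, huu, geo_dist hr' hs hsu]

private lemma diverge {p : T.space} {r r' : ℝ → T.space}
    (hr : IsGeodesicRay r) (hr' : IsGeodesicRay r')
    (h0 : r 0 = p) (h0' : r' 0 = p) (hg : ¬ GermEq p r r') :
    ∀ a b : ℝ, 0 ≤ a → 0 ≤ b → dist (r a) (r' b) = a + b := by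
  intro a b ha hb
  have hdpa : dist p (r a) = a := by rw [← h0]; exact geo_dist0 hr ha
  have hdpb : dist p (r' b) = b := by rw [← h0']; exact geo_dist0 hr' hb
  have key : gp p (r a) (r' b) ≤ 0 := by
    by_contra hpos
    push_neg at hpos
    set c := gp p (r a) (r' b) with hc
    have hca : c ≤ a := by
      have := gp_le_left p (r a) (r' b); rw [hdpa] at this; exact this
    have hcb : c ≤ b := by
      have := gp_le_right p (r a) (r' b); rw [hdpb] at this; exact this
    have hdpc : dist p (r c) = c := by rw [← h0]; exact geo_dist0 hr hpos.le
    have hdpc' : dist p (r' c) = c := by rw [← h0']; exact geo_dist0 hr' hpos.le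
    have h1 : gp p (r c) (r a) = c := by
      unfold gp
      rw [hdpc, hdpa, geo_dist hr hpos.le hca]
      ring
    have h2 : gp p (r' b) (r' c) = c := by
      unfold gp
      rw [hdpb, hdpc', dist_comm (r' b) (r' c), geo_dist hr' hpos.le hcb]
      ring
    have g1 : c ≤ gp p (r c) (r' b) :=
      le_trans (le_min h1.ge le_rfl) (gp_ineq p (r c) (r a) (r' b))
    have g2 : c ≤ gp p (r c) (r' c) :=
      le_trans (le_min g1 h2.ge) (gp_ineq p (r c) (r' b) (r' c))
    have hdcc : dist (r c) (r' c) ≤ 0 := by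
      unfold gp at g2
      rw [hdpc, hdpc'] at g2
      linarith
    refine hg ⟨c, hpos, fun s hs => ?_⟩
    exact ray_unique hr hr' h0 h0' hpos.le (dist_le_zero.mp hdcc) s hs.1 hs.2
  have hup : dist (r a) (r' b) ≤ a + b := by
    calc dist (r a) (r' b) ≤ dist (r a) p + dist p (r' b) := dist_triangle _ _ _
      _ = a + b := by rw [dist_comm (r a) p, hdpa, hdpb]
  have hdown : a + b ≤ dist (r a) (r' b) := by
    unfold gp at key
    rw [hdpa, hdpb] at key
    linarith
  linarith


private lemma shift_ray {X : Type*} [MetricSpace X] {r : ℝ → X} (hr : IsGeodesicRay r)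
    {a : ℝ} (ha : 0 ≤ a) :
    IsGeodesicRay (fun s => r (a + s)) ∧ Asymptotic (fun s => r (a + s)) r := by
  constructor
  · intro s hs t ht
    rw [hr (a+s) (by linarith) (a+t) (by linarith)]
    congr 1
    ring
  · refine ⟨a, fun t ht => ?_⟩
    rw [hr (a+t) (by linarith) t ht]
    have e : a + t - t = a := by ring
    rw [e, abs_of_nonneg ha]

private lemma not_germEq_of_dist {X : Type*} [MetricSpace X] {t : X} {f g : ℝ → X} {δ : ℝ}
    (hδ : 0 < δ) (h : ∀ ε, 0 < ε → ε ≤ δ → dist (f ε) (g ε) ≠ 0) : ¬ GermEq t f g := by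
  rintro ⟨ε₀, hε₀, hag⟩
  have hmem : min ε₀ δ ∈ Set.Icc (0:ℝ) ε₀ := ⟨le_of_lt (lt_min hε₀ hδ), min_le_left _ _⟩
  exact h (min ε₀ δ) (lt_min hε₀ hδ) (min_le_right _ _) (by rw [hag _ hmem, dist_self])

private lemma backray_spec {Xr Wr : ℝ → T.space} (hX : IsGeodesicRay Xr) (hW : IsGeodesicRay Wr)
    {k L : ℝ} (hk : 0 ≤ k) (hkL : k ≤ L)
    (heq : ∀ u, 0 ≤ u → u ≤ k → Xr u = Wr u)
    (hdiv : ∀ u v, k ≤ u → u ≤ L → k ≤ v → dist (Xr u) (Wr v) = (u - k) + (v - k)) :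
    ∃ rb : ℝ → T.space, IsGeodesicRay rb ∧ rb 0 = Xr L ∧ Asymptotic rb Wr ∧
      (∀ s, s ≤ L - k → rb s = Xr (L - s)) ∧
      (∀ s, L - k ≤ s → rb s = Wr (s - L + 2*k)) := by
  have hL0 : 0 ≤ L := hk.trans hkL
  have hval1 : ∀ s, s ≤ L - k →
      (if s ≤ L - k then Xr (L - s) else Wr (s - L + 2*k)) = Xr (L - s) :=
    fun s h => if_pos h
  have hval2 : ∀ s, L - k ≤ s →
      (if s ≤ L - k then Xr (L - s) else Wr (s - L + 2*k)) = Wr (s - L + 2*k) := by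
    intro s h
    rcases eq_or_lt_of_le h with h' | h'
    · rw [if_pos h'.ge, ← h']
      have e1 : L - (L - k) = k := by ring
      have e2 : (L - k) - L + 2*k = k := by ring
      rw [e1, e2]
      exact heq k hk le_rfl
    · exact if_neg (not_le.mpr h')
  have key : ∀ s t, 0 ≤ s → s ≤ t →
      dist (if s ≤ L - k then Xr (L - s) else Wr (s - L + 2*k))
           (if t ≤ L - k then Xr (L - t) else Wr (t - L + 2*k)) = t - s := by
    intro s t hs hst
    by_cases h2 : t ≤ L - k
    · have h1 : s ≤ L - k := hst.trans h2
      rw [hval1 s h1, hval1 t h2, hX (L - s) (by linarith) (L - t) (by linarith)]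
      have e : L - s - (L - t) = t - s := by ring
      rw [e, abs_of_nonneg (by linarith)]
    · push_neg at h2
      by_cases h1 : s ≤ L - k
      · rw [hval1 s h1, hval2 t h2.le,
          hdiv (L - s) (t - L + 2*k) (by linarith) (by linarith) (by linarith)]
        ring
      · push_neg at h1
        rw [hval2 s h1.le, hval2 t h2.le,
          hW (s - L + 2*k) (by linarith) (t - L + 2*k) (by linarith)]
        have e : s - L + 2*k - (t - L + 2*k) = s - t := by ring
        rw [e, abs_of_nonpos (by linarith), neg_sub]
  refine ⟨fun s => if s ≤ L - k then Xr (L - s) else Wr (s - L + 2*k), ?_, ?_, ?_,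
    fun s h => if_pos h, fun s h => hval2 s h⟩
  · -- geodesic
    intro s hs t ht
    show dist (if s ≤ L - k then Xr (L - s) else Wr (s - L + 2*k))
        (if t ≤ L - k then Xr (L - t) else Wr (t - L + 2*k)) = |s - t|
    rcases le_total s t with h | h
    · rw [key s t hs h, abs_of_nonpos (by linarith), neg_sub]
    · rw [dist_comm, key t s ht h, abs_of_nonneg (by linarith)]
  · -- base point
    show (if (0:ℝ) ≤ L - k then Xr (L - 0) else Wr (0 - L + 2*k)) = Xr L
    rw [if_pos (by linarith : (0:ℝ) ≤ L - k)]
    norm_num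
  · -- asymptotic
    refine ⟨3*L + 1, fun t ht => ?_⟩
    show dist (if t ≤ L - k then Xr (L - t) else Wr (t - L + 2*k)) (Wr t) ≤ 3*L + 1
    by_cases h : L - k ≤ t
    · rw [hval2 t h, hW (t - L + 2*k) (by linarith) t ht]
      have e : t - L + 2*k - t = 2*k - L := by ring
      rw [e]
      have : |2*k - L| ≤ L := abs_le.mpr ⟨by linarith, by linarith⟩
      linarith
    · push_neg at h
      have h1 := key t (L - k) ht h.le
      have h2 : (if (L - k : ℝ) ≤ L - k then Xr (L - (L - k)) else Wr ((L - k) - L + 2*k)) = Wr k := by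
        rw [if_pos le_rfl]
        have e1 : L - (L - k) = k := by ring
        rw [e1]
        exact heq k hk le_rfl
      calc dist (if t ≤ L - k then Xr (L - t) else Wr (t - L + 2*k)) (Wr t)
          ≤ dist (if t ≤ L - k then Xr (L - t) else Wr (t - L + 2*k))
              (if (L - k : ℝ) ≤ L - k then Xr (L - (L - k)) else Wr ((L - k) - L + 2*k))
            + dist (if (L - k : ℝ) ≤ L - k then Xr (L - (L - k)) else Wr ((L - k) - L + 2*k)) (Wr t) :=
            dist_triangle _ _ _
        _ = (L - k - t) + dist (Wr k) (Wr t) := by rw [h1, h2]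
        _ ≤ 3*L + 1 := by
            rw [hW k hk t ht]
            have : |k - t| ≤ L := abs_le.mpr ⟨by linarith, by linarith⟩
            linarith

private lemma core {p : T.space} {Xr Yr Zr : ℝ → T.space}
    (hX : IsGeodesicRay Xr) (hY : IsGeodesicRay Yr) (hZ : IsGeodesicRay Zr)
    (hX0 : Xr 0 = p) (hY0 : Yr 0 = p) (hZ0 : Zr 0 = p)
    {a b c : ℝ} (ha0 : 0 ≤ a) (hb0 : 0 ≤ b) (hc0 : 0 ≤ c)
    (haeq : ∀ u, 0 ≤ u → u ≤ a → Xr u = Yr u)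
    (hadiv : ∀ u v, a ≤ u → a ≤ v → dist (Xr u) (Yr v) = (u - a) + (v - a))
    (hbeq : ∀ u, 0 ≤ u → u ≤ b → Xr u = Zr u)
    (hbdiv : ∀ u v, b ≤ u → b ≤ v → dist (Xr u) (Zr v) = (u - b) + (v - b))
    (hceq : ∀ u, 0 ≤ u → u ≤ c → Yr u = Zr u)
    (hcdiv : ∀ u v, c ≤ u → c ≤ v → dist (Yr u) (Zr v) = (u - c) + (v - c))
    (h1 : a ≤ b) (h2 : c ≤ b) :
    ∃ (t : T.space) (rx ry rz : ℝ → T.space),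
      IsGeodesicRay rx ∧ IsGeodesicRay ry ∧ IsGeodesicRay rz ∧
      rx 0 = t ∧ ry 0 = t ∧ rz 0 = t ∧
      Asymptotic rx Xr ∧ Asymptotic ry Yr ∧ Asymptotic rz Zr ∧
      ¬ GermEq t rx ry ∧ ¬ GermEq t ry rz ∧ ¬ GermEq t rx rz := by
  obtain ⟨ry, hryg, hry0, hrya, hryv1, hryv2⟩ :=
    backray_spec hX hY ha0 h1 haeq (fun u v hu _ hv => hadiv u v hu hv)
  obtain ⟨hrxg, hrxa⟩ := shift_ray hX hb0
  obtain ⟨hrzg, hrza⟩ := shift_ray hZ hb0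
  have hrx0 : (fun s => Xr (b + s)) 0 = Xr b := by norm_num
  have hrz0 : (fun s => Zr (b + s)) 0 = Xr b := by
    show Zr (b + 0) = Xr b
    rw [add_zero]
    exact (hbeq b hb0 le_rfl).symm
  have hxz : ¬ GermEq (Xr b) (fun s => Xr (b + s)) (fun s => Zr (b + s)) := by
    refine not_germEq_of_dist one_pos (fun ε hε _ => ?_)
    show dist (Xr (b + ε)) (Zr (b + ε)) ≠ 0
    rw [hbdiv (b + ε) (b + ε) (by linarith) (by linarith)]
    have hpos : (0:ℝ) < b + ε - b + (b + ε - b) := by linarith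
    exact ne_of_gt hpos
  rcases eq_or_lt_of_le h1 with hab | hab
  · -- a = b ; derive c = b
    have hyb : Yr b = Xr b := (haeq b hb0 hab.ge).symm
    have hcb : c = b := by
      by_contra hne
      have hlt : c < b := lt_of_le_of_ne h2 hne
      have hd := hcdiv b b hlt.le hlt.le
      rw [hyb, hbeq b hb0 le_rfl, dist_self] at hd
      linarith
    have hxy : ¬ GermEq (Xr b) (fun s => Xr (b + s)) ry := by
      refine not_germEq_of_dist one_pos (fun ε hε _ => ?_)
      have hv := hryv2 ε (by linarith)
      show dist (Xr (b + ε)) (ry ε) ≠ 0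
      rw [hv, hadiv (b + ε) (ε - b + 2*a) (by linarith) (by linarith)]
      have : (0:ℝ) < b + ε - a + (ε - b + 2*a - a) := by linarith [hab]
      linarith
    have hyz : ¬ GermEq (Xr b) ry (fun s => Zr (b + s)) := by
      refine not_germEq_of_dist one_pos (fun ε hε _ => ?_)
      have hv := hryv2 ε (by linarith)
      show dist (ry ε) (Zr (b + ε)) ≠ 0
      rw [hv, hcdiv (ε - b + 2*a) (b + ε) (by linarith [hab, hcb]) (by linarith [hcb])]
      have : (0:ℝ) < ε - b + 2*a - c + (b + ε - c) := by linarith [hab, hcb]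
      linarith
    exact ⟨Xr b, _, ry, _, hrxg, hryg, hrzg, hrx0, hry0, hrz0, hrxa, hrya, hrza, hxy, hyz, hxz⟩
  · -- a < b
    have hxy : ¬ GermEq (Xr b) (fun s => Xr (b + s)) ry := by
      refine not_germEq_of_dist (sub_pos.mpr hab) (fun ε hε hεδ => ?_)
      have hv := hryv1 ε hεδ
      show dist (Xr (b + ε)) (ry ε) ≠ 0
      rw [hv, hX (b + ε) (by linarith) (b - ε) (by linarith)]
      have e : b + ε - (b - ε) = 2*ε := by ring
      rw [e, abs_of_nonneg (by linarith)]
      linarith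
    have hyz : ¬ GermEq (Xr b) ry (fun s => Zr (b + s)) := by
      refine not_germEq_of_dist (sub_pos.mpr hab) (fun ε hε hεδ => ?_)
      have hv := hryv1 ε hεδ
      show dist (ry ε) (Zr (b + ε)) ≠ 0
      rw [hv, hbeq (b - ε) (by linarith) (by linarith),
        hZ (b - ε) (by linarith) (b + ε) (by linarith)]
      have e : b - ε - (b + ε) = -(2*ε) := by ring
      rw [e, abs_neg, abs_of_nonneg (by linarith)]
      linarith
    exact ⟨Xr b, _, ry, _, hrxg, hryg, hrzg, hrx0, hry0, hrz0, hrxa, hrya, hrza, hxy, hyz, hxz⟩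

private lemma branch_ex {p : T.space} {r r' : ℝ → T.space}
    (hr : IsGeodesicRay r) (hr' : IsGeodesicRay r') (h0 : r 0 = p) (h0' : r' 0 = p)
    (hna : ¬ Asymptotic r r') :
    ∃ m, 0 ≤ m ∧ (∀ u, 0 ≤ u → u ≤ m → r u = r' u) ∧
      ∀ u v, m ≤ u → m ≤ v → dist (r u) (r' v) = (u - m) + (v - m) := by
  classical
  set A := {s : ℝ | 0 ≤ s ∧ r s = r' s} with hA
  have h0A : (0:ℝ) ∈ A := ⟨le_rfl, by rw [h0, h0']⟩
  have hbdd : BddAbove A := by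
    by_contra hb
    rw [not_bddAbove_iff] at hb
    refine hna ⟨0, fun t ht => ?_⟩
    obtain ⟨s, hsA, hts⟩ := hb t
    rw [ray_unique hr hr' h0 h0' hsA.1 hsA.2 t ht hts.le, dist_self]
  set m := sSup A with hm
  have hm0 : 0 ≤ m := le_csSup hbdd h0A
  have hmA : r m = r' m := by
    have hdd : ∀ ε : ℝ, 0 < ε → dist (r m) (r' m) ≤ 2*ε := by
      intro ε hε
      obtain ⟨s, hsA, hs⟩ := exists_lt_of_lt_csSup ⟨0, h0A⟩ (show m - ε < m by linarith)
      have hsm : s ≤ m := le_csSup hbdd hsA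
      calc dist (r m) (r' m) ≤ dist (r m) (r s) + dist (r s) (r' m) := dist_triangle _ _ _
        _ = dist (r m) (r s) + dist (r' s) (r' m) := by rw [hsA.2]
        _ = (m - s) + (m - s) := by
            rw [dist_comm (r m), geo_dist hr hsA.1 hsm, geo_dist hr' hsA.1 hsm]
        _ ≤ 2*ε := by linarith
    by_contra hne
    have hd : 0 < dist (r m) (r' m) := dist_pos.mpr hne
    have := hdd (dist (r m) (r' m) / 4) (by linarith)
    linarith
  have hagree : ∀ u, 0 ≤ u → u ≤ m → r u = r' u := ray_unique hr hr' h0 h0' hm0 hmA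
  refine ⟨m, hm0, hagree, ?_⟩
  have hsg : IsGeodesicRay (fun s => r (m + s)) := (shift_ray hr hm0).1
  have hsg' : IsGeodesicRay (fun s => r' (m + s)) := (shift_ray hr' hm0).1
  have hng : ¬ GermEq (r m) (fun s => r (m + s)) (fun s => r' (m + s)) := by
    rintro ⟨ε, hε, hag⟩
    have h1 : r (m + ε) = r' (m + ε) := hag ε ⟨hε.le, le_rfl⟩
    have hmem : m + ε ∈ A := ⟨by linarith, h1⟩
    have := le_csSup hbdd hmem
    linarith
  have hb0 : (fun s => r (m + s)) 0 = r m := by norm_num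
  have hb0' : (fun s => r' (m + s)) 0 = r m := by
    show r' (m + 0) = r m
    rw [add_zero]
    exact hmA.symm
  have hD := diverge hsg hsg' hb0 hb0' hng
  intro u v hu hv
  have h1 := hD (u - m) (v - m) (by linarith) (by linarith)
  have e1 : m + (u - m) = u := by ring
  have e2 : m + (v - m) = v := by ring
  simp only [e1, e2] at h1
  exact h1

private lemma seg_agree {x u v : T.space} {γ γ' : ℝ → T.space}
    (hγ0 : γ 0 = x) (hγe : γ (dist x u) = u)
    (hγi : ∀ s ∈ Set.Icc 0 (dist x u), ∀ t ∈ Set.Icc 0 (dist x u), dist (γ s) (γ t) = |s - t|)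
    (hγ0' : γ' 0 = x) (hγe' : γ' (dist x v) = v)
    (hγi' : ∀ s ∈ Set.Icc 0 (dist x v), ∀ t ∈ Set.Icc 0 (dist x v), dist (γ' s) (γ' t) = |s - t|)
    {s : ℝ} (hs : 0 ≤ s) (hsg : s ≤ gp x u v) : γ s = γ' s := by
  have hsu : s ≤ dist x u := hsg.trans (gp_le_left x u v)
  have hsv : s ≤ dist x v := hsg.trans (gp_le_right x u v)
  have hd1 : dist x (γ s) = s := by
    rw [← hγ0]
    rw [hγi 0 ⟨le_rfl, dist_nonneg⟩ s ⟨hs, hsu⟩]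
    rw [abs_sub_comm, abs_of_nonneg (by linarith)]
    ring
  have hd2 : dist (γ s) u = dist x u - s := by
    have h := hγi s ⟨hs, hsu⟩ (dist x u) ⟨dist_nonneg, le_rfl⟩
    rw [hγe] at h
    rw [h, abs_of_nonpos (by linarith), neg_sub]
  have hd1' : dist x (γ' s) = s := by
    rw [← hγ0']
    rw [hγi' 0 ⟨le_rfl, dist_nonneg⟩ s ⟨hs, hsv⟩]
    rw [abs_sub_comm, abs_of_nonneg (by linarith)]
    ring
  have hd2' : dist (γ' s) v = dist x v - s := by
    have h := hγi' s ⟨hs, hsv⟩ (dist x v) ⟨dist_nonneg, le_rfl⟩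
    rw [hγe'] at h
    rw [h, abs_of_nonpos (by linarith), neg_sub]
  have hgp1 : gp x (γ s) u = s := by
    unfold gp
    rw [hd1, hd2]
    ring
  have hgp2 : gp x v (γ' s) = s := by
    unfold gp
    rw [hd1', dist_comm v (γ' s), hd2']
    ring
  have g1 : s ≤ gp x (γ s) v :=
    le_trans (le_min hgp1.ge hsg) (gp_ineq x (γ s) u v)
  have g2 : s ≤ gp x (γ s) (γ' s) :=
    le_trans (le_min g1 hgp2.ge) (gp_ineq x (γ s) v (γ' s))
  have : dist (γ s) (γ' s) ≤ 0 := by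
    unfold gp at g2
    rw [hd1, hd1'] at g2
    linarith
  exact dist_le_zero.mp this

private lemma rebase (x : T.space) (r : ℝ → T.space) (hr : IsGeodesicRay r) :
    ∃ ρ : ℝ → T.space, IsGeodesicRay ρ ∧ ρ 0 = x ∧ Asymptotic ρ r := by
  classical
  have hd0n : (0:ℝ) ≤ dist x (r 0) := dist_nonneg
  set d0 := dist x (r 0) with hd0def
  choose γ hγ0 hγe hγi using fun n : ℕ => T.geodesic x (r (n : ℝ))
  have hrd : ∀ n : ℕ, dist (r 0) (r (n:ℝ)) = (n:ℝ) := fun n => geo_dist0 hr (Nat.cast_nonneg n)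
  have hLlow : ∀ n : ℕ, (n : ℝ) - d0 ≤ dist x (r (n:ℝ)) := by
    intro n
    have h1 := dist_triangle (r 0) x (r (n:ℝ))
    have h2 := dist_comm (r 0) x
    rw [hrd n] at h1
    rw [hd0def]
    linarith
  have hLhigh : ∀ n : ℕ, dist x (r (n:ℝ)) ≤ (n:ℝ) + d0 := by
    intro n
    have h1 := dist_triangle x (r 0) (r (n:ℝ))
    rw [hrd n] at h1
    rw [hd0def]
    linarith
  have hagree : ∀ s, 0 ≤ s → ∀ n m : ℕ, s + d0 ≤ (n:ℝ) → s + d0 ≤ (m:ℝ) → γ n s = γ m s := by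
    intro s hs n m hn hm
    have hgp : s ≤ gp x (r (n:ℝ)) (r (m:ℝ)) := by
      have hd : dist (r (n:ℝ)) (r (m:ℝ)) = |(n:ℝ) - (m:ℝ)| :=
        hr _ (Nat.cast_nonneg n) _ (Nat.cast_nonneg m)
      unfold gp
      rw [hd]
      rcases le_total ((n:ℝ)) ((m:ℝ)) with h | h
      · rw [abs_of_nonpos (by linarith)]
        linarith [hLlow n, hLlow m]
      · rw [abs_of_nonneg (by linarith)]
        linarith [hLlow n, hLlow m]
    exact seg_agree (hγ0 n) (hγe n) (hγi n) (hγ0 m) (hγe m) (hγi m) hs hgp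
  have hNbig : ∀ s : ℝ, 0 ≤ s → s + d0 ≤ ((⌈s⌉₊ + ⌈d0⌉₊ + 1 : ℕ) : ℝ) := by
    intro s hs
    push_cast
    have h1 := Nat.le_ceil s
    have h2 := Nat.le_ceil d0
    linarith
  have hρval : ∀ s, 0 ≤ s → ∀ n : ℕ, s + d0 ≤ (n:ℝ) →
      γ (⌈s⌉₊ + ⌈d0⌉₊ + 1) s = γ n s := by
    intro s hs n hn
    exact hagree s hs _ n (hNbig s hs) hn
  refine ⟨fun s => γ (⌈s⌉₊ + ⌈d0⌉₊ + 1) s, ?_, ?_, ?_⟩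
  · intro s hs t ht
    show dist (γ (⌈s⌉₊ + ⌈d0⌉₊ + 1) s) (γ (⌈t⌉₊ + ⌈d0⌉₊ + 1) t) = |s - t|
    set n : ℕ := ⌈max s t⌉₊ + ⌈d0⌉₊ + 1 with hn
    have hsn : s + d0 ≤ (n:ℝ) := by
      have h1 := Nat.le_ceil (max s t)
      have h2 := Nat.le_ceil d0
      have h3 : s ≤ max s t := le_max_left _ _
      rw [hn]
      push_cast
      linarith
    have htn : t + d0 ≤ (n:ℝ) := by
      have h1 := Nat.le_ceil (max s t)
      have h2 := Nat.le_ceil d0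
      have h3 : t ≤ max s t := le_max_right _ _
      rw [hn]
      push_cast
      linarith
    rw [hρval s hs n hsn, hρval t ht n htn]
    exact hγi n s ⟨hs, by linarith [hLlow n]⟩ t ⟨ht, by linarith [hLlow n]⟩
  · show γ (⌈(0:ℝ)⌉₊ + ⌈d0⌉₊ + 1) 0 = x
    exact hγ0 _
  · refine ⟨3*d0 + 6, fun t ht => ?_⟩
    show dist (γ (⌈t⌉₊ + ⌈d0⌉₊ + 1) t) (r t) ≤ 3*d0 + 6
    set n : ℕ := ⌈t⌉₊ + ⌈d0⌉₊ + 1 with hn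
    have htn : t + d0 ≤ (n:ℝ) := hNbig t ht
    have hnt : (n:ℝ) ≤ t + d0 + 3 := by
      have h1 := Nat.ceil_lt_add_one ht
      have h2 := Nat.ceil_lt_add_one hd0n
      rw [hn]
      push_cast
      linarith
    have hLn := hLlow n
    have hLn' := hLhigh n
    have htL : t ≤ dist x (r (n:ℝ)) := by linarith
    calc dist (γ n t) (r t)
        ≤ dist (γ n t) (γ n (dist x (r (n:ℝ)))) + dist (γ n (dist x (r (n:ℝ)))) (r t) :=
          dist_triangle _ _ _
      _ = (dist x (r (n:ℝ)) - t) + dist (r (n:ℝ)) (r t) := by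
          have h := hγi n t ⟨ht, htL⟩ (dist x (r (n:ℝ))) ⟨dist_nonneg, le_rfl⟩
          rw [hγe n] at h
          rw [hγe n, h, abs_of_nonpos (by linarith), neg_sub]
      _ ≤ 3*d0 + 6 := by
          rw [hr (n:ℝ) (Nat.cast_nonneg n) t ht, abs_of_nonneg (by linarith)]
          linarith

private lemma tripod {p : T.space} {A B C : ℝ → T.space}
    (hA : IsGeodesicRay A) (hB : IsGeodesicRay B) (hC : IsGeodesicRay C)
    (hA0 : A 0 = p) (hB0 : B 0 = p) (hC0 : C 0 = p)
    (hAB : ¬ Asymptotic A B) (hAC : ¬ Asymptotic A C) (hBC : ¬ Asymptotic B C) :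
    ∃ (t : T.space) (rx ry rz : ℝ → T.space),
      IsGeodesicRay rx ∧ IsGeodesicRay ry ∧ IsGeodesicRay rz ∧
      rx 0 = t ∧ ry 0 = t ∧ rz 0 = t ∧
      Asymptotic rx A ∧ Asymptotic ry B ∧ Asymptotic rz C ∧
      ¬ GermEq t rx ry ∧ ¬ GermEq t ry rz ∧ ¬ GermEq t rx rz := by
  obtain ⟨mAB, hab0, habeq, habdiv⟩ := branch_ex hA hB hA0 hB0 hAB
  obtain ⟨mAC, hac0, haceq, hacdiv⟩ := branch_ex hA hC hA0 hC0 hAC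
  obtain ⟨mBC, hbc0, hbceq, hbcdiv⟩ := branch_ex hB hC hB0 hC0 hBC
  rcases le_total mAB mAC with h1 | h1
  · rcases le_total mBC mAC with h2 | h2
    · exact core hA hB hC hA0 hB0 hC0 hab0 hac0 hbc0 habeq habdiv haceq hacdiv hbceq hbcdiv h1 h2
    · obtain ⟨t, rx, ry, rz, g1, g2, g3, b1, b2, b3, as1, as2, as3, n1, n2, n3⟩ :=
        core hB hA hC hB0 hA0 hC0 hab0 hbc0 hac0
          (fun u hu huk => (habeq u hu huk).symm)
          (fun u v hu hv => by rw [dist_comm, habdiv v u hv hu]; ring)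
          hbceq hbcdiv haceq hacdiv (h1.trans h2) h2
      exact ⟨t, ry, rx, rz, g2, g1, g3, b2, b1, b3, as2, as1, as3,
        fun h => n1 (germEq_symm h), n3, n2⟩
  · rcases le_total mBC mAB with h2 | h2
    · obtain ⟨t, rx, ry, rz, g1, g2, g3, b1, b2, b3, as1, as2, as3, n1, n2, n3⟩ :=
        core hA hC hB hA0 hC0 hB0 hac0 hab0 hbc0
          haceq hacdiv habeq habdiv
          (fun u hu huk => (hbceq u hu huk).symm)
          (fun u v hu hv => by rw [dist_comm, hbcdiv v u hv hu]; ring)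
          h1 h2
      exact ⟨t, rx, rz, ry, g1, g3, g2, b1, b3, b2, as1, as3, as2,
        n3, fun h => n2 (germEq_symm h), n1⟩
    · obtain ⟨t, rx, ry, rz, g1, g2, g3, b1, b2, b3, as1, as2, as3, n1, n2, n3⟩ :=
        core hB hA hC hB0 hA0 hC0 hab0 hbc0 hac0
          (fun u hu huk => (habeq u hu huk).symm)
          (fun u v hu hv => by rw [dist_comm, habdiv v u hv hu]; ring)
          hbceq hbcdiv haceq hacdiv h2 (h1.trans h2)
      exact ⟨t, ry, rx, rz, g2, g1, g3, b2, b1, b3, as2, as1, as3,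
        fun h => n1 (germEq_symm h), n3, n2⟩

private lemma up_bound {w : T.space} {f g : ℝ → T.space}
    (hf : IsGeodesicRay f) (hg : IsGeodesicRay g) (hf0 : f 0 = w) (hg0 : g 0 = w)
    (hfg : ¬ GermEq w f g) {N cx cy : ℝ} (hN : 0 ≤ N) {Xp Yp : T.space}
    (hx : dist Xp (f N) ≤ cx) (hy : dist Yp (g N) ≤ cy)
    (hcx : cx < N) (hcy : cy < N) :
    dist w Xp + dist w Yp ≤ dist Xp Yp := by
  have hdiv := diverge hf hg hf0 hg0 hfg N N hN hN
  have hwf : dist w (f N) = N := by rw [← hf0]; exact geo_dist0 hf hN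
  have hwg : dist w (g N) = N := by rw [← hg0]; exact geo_dist0 hg hN
  have g0 : gp w (f N) (g N) = 0 := by
    unfold gp
    rw [hdiv, hwf, hwg]
    ring
  have a1 : N - cx ≤ gp w (f N) Xp := by
    unfold gp
    have h1 := dist_triangle w Xp (f N)
    have h2 : dist (f N) Xp ≤ cx := by rw [dist_comm]; exact hx
    rw [hwf] at h1
    linarith
  have a2 : N - cy ≤ gp w Yp (g N) := by
    unfold gp
    have h1 := dist_triangle w Yp (g N)
    rw [hwg] at h1
    linarith
  by_contra hcon
  push_neg at hcon
  have hP : 0 < gp w Xp Yp := by unfold gp; linarith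
  have c1 : 0 < gp w Xp (g N) :=
    lt_of_lt_of_le (lt_min hP (by linarith)) (gp_ineq w Xp Yp (g N))
  have c2 : 0 < gp w (f N) (g N) :=
    lt_of_lt_of_le (lt_min (by linarith) c1) (gp_ineq w (f N) Xp (g N))
  rw [g0] at c2
  exact lt_irrefl _ c2

private lemma low_bound {w : T.space} {f g : ℝ → T.space}
    (hf : IsGeodesicRay f) (hg : IsGeodesicRay g) (hf0 : f 0 = w) (hg0 : g 0 = w)
    {δ : ℝ} (hδ : 0 < δ) (hag : ∀ s ∈ Set.Icc (0:ℝ) δ, f s = g s)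
    {N cx cy : ℝ} {Xp Yp : T.space}
    (hx : dist Xp (f N) ≤ cx) (hy : dist Yp (g N) ≤ cy)
    (hcx : cx + δ ≤ N) (hcy : cy + δ ≤ N) (hc0x : 0 ≤ cx) (hc0y : 0 ≤ cy) :
    dist Xp Yp + 2*δ ≤ dist w Xp + dist w Yp := by
  have hδN : δ ≤ N := by linarith
  have hN : (0:ℝ) ≤ N := by linarith
  have hwf : dist w (f N) = N := by rw [← hf0]; exact geo_dist0 hf hN
  have hwg : dist w (g N) = N := by rw [← hg0]; exact geo_dist0 hg hN
  have hfgN : dist (f N) (g N) ≤ 2*N - 2*δ := by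
    calc dist (f N) (g N) ≤ dist (f N) (f δ) + dist (f δ) (g N) := dist_triangle _ _ _
      _ = (N - δ) + (N - δ) := by
          rw [dist_comm (f N) (f δ), geo_dist hf hδ.le hδN, hag δ ⟨hδ.le, le_rfl⟩,
            geo_dist hg hδ.le hδN]
      _ = 2*N - 2*δ := by ring
  have gfg : δ ≤ gp w (f N) (g N) := by unfold gp; rw [hwf, hwg]; linarith
  have a1 : δ ≤ gp w Xp (f N) := by
    unfold gp
    have h1 := dist_triangle w Xp (f N)
    rw [hwf] at h1
    linarith
  have a2 : δ ≤ gp w (g N) Yp := by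
    unfold gp
    have h1 := dist_triangle w Yp (g N)
    have h2 : dist (g N) Yp ≤ cy := by rw [dist_comm]; exact hy
    rw [hwg] at h1
    linarith
  have step1 : δ ≤ gp w (f N) Yp :=
    le_trans (le_min gfg a2) (gp_ineq w (f N) (g N) Yp)
  have step2 : δ ≤ gp w Xp Yp :=
    le_trans (le_min a1 step1) (gp_ineq w Xp (f N) Yp)
  unfold gp at step2
  linarith

private lemma imposs {t t' : T.space} {u1 u2 u3 u4 v1 v2 v3 v4 : ℝ → T.space}
    (hu1 : IsGeodesicRay u1) (hu2 : IsGeodesicRay u2) (hu3 : IsGeodesicRay u3)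
    (hu4 : IsGeodesicRay u4)
    (hv1 : IsGeodesicRay v1) (hv2 : IsGeodesicRay v2) (hv3 : IsGeodesicRay v3)
    (hv4 : IsGeodesicRay v4)
    (hu10 : u1 0 = t) (hu20 : u2 0 = t) (hu30 : u3 0 = t) (hu40 : u4 0 = t)
    (hv10 : v1 0 = t') (hv20 : v2 0 = t') (hv30 : v3 0 = t') (hv40 : v4 0 = t')
    (ha1 : Asymptotic u1 v1) (ha2 : Asymptotic u2 v2) (ha3 : Asymptotic u3 v3)
    (ha4 : Asymptotic u4 v4)
    (hu12 : ¬ GermEq t u1 u2) (hu13 : ¬ GermEq t u1 u3) (hu23 : ¬ GermEq t u2 u3)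
    (hu14 : GermEq t u1 u4)
    (hv13 : ¬ GermEq t' v1 v3) (hv14 : ¬ GermEq t' v1 v4) (hv34 : ¬ GermEq t' v3 v4)
    (hv12 : GermEq t' v1 v2) : False := by
  obtain ⟨δ1, hδ1, hag1⟩ := id hu14
  obtain ⟨δ2, hδ2, hag2⟩ := id hv12
  obtain ⟨C1, hC1⟩ := ha1
  obtain ⟨C2, hC2⟩ := ha2
  obtain ⟨C3, hC3⟩ := ha3
  obtain ⟨C4, hC4⟩ := ha4
  set c1 := max C1 0 with hc1
  set c2 := max C2 0 with hc2
  set c3 := max C3 0 with hc3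
  set c4 := max C4 0 with hc4
  have hc1n : 0 ≤ c1 := le_max_right _ _
  have hc2n : 0 ≤ c2 := le_max_right _ _
  have hc3n : 0 ≤ c3 := le_max_right _ _
  have hc4n : 0 ≤ c4 := le_max_right _ _
  set N := c1 + c2 + c3 + c4 + δ1 + δ2 + 1 with hN
  have hN0 : (0:ℝ) ≤ N := by positivity
  have hx1 : dist (u1 N) (v1 N) ≤ c1 := (hC1 N hN0).trans (le_max_left _ _)
  have hx2 : dist (u2 N) (v2 N) ≤ c2 := (hC2 N hN0).trans (le_max_left _ _)
  have hx3 : dist (u3 N) (v3 N) ≤ c3 := (hC3 N hN0).trans (le_max_left _ _)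
  have hx4 : dist (u4 N) (v4 N) ≤ c4 := (hC4 N hN0).trans (le_max_left _ _)
  have hu34 : ¬ GermEq t u3 u4 := fun h => hu13 (germEq_trans hu14 (germEq_symm h))
  have hv23 : ¬ GermEq t' v2 v3 := fun h => hv13 (germEq_trans hv12 h)
  have dAB : dist (u1 N) (u2 N) = N + N := diverge hu1 hu2 hu10 hu20 hu12 N N hN0 hN0
  have dBC : dist (u2 N) (u3 N) = N + N := diverge hu2 hu3 hu20 hu30 hu23 N N hN0 hN0
  have dCD : dist (u3 N) (u4 N) = N + N := diverge hu3 hu4 hu30 hu40 hu34 N N hN0 hN0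
  have hδ1N : δ1 ≤ N := by linarith
  have dAD : dist (u1 N) (u4 N) ≤ 2*N - 2*δ1 := by
    calc dist (u1 N) (u4 N) ≤ dist (u1 N) (u1 δ1) + dist (u1 δ1) (u4 N) := dist_triangle _ _ _
      _ = (N - δ1) + (N - δ1) := by
          rw [dist_comm (u1 N) (u1 δ1), geo_dist hu1 hδ1.le hδ1N, hag1 δ1 ⟨hδ1.le, le_rfl⟩,
            geo_dist hu4 hδ1.le hδ1N]
      _ = 2*N - 2*δ1 := by ring
  have B1 : dist (u1 N) (u2 N) + 2*δ2 ≤ dist t' (u1 N) + dist t' (u2 N) :=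
    low_bound hv1 hv2 hv10 hv20 hδ2 hag2
      hx1 hx2
      (by linarith) (by linarith) hc1n hc2n
  have B2 : dist t' (u2 N) + dist t' (u3 N) ≤ dist (u2 N) (u3 N) :=
    up_bound hv2 hv3 hv20 hv30 hv23 hN0
      hx2 hx3
      (by linarith) (by linarith)
  have B3 : dist t' (u1 N) + dist t' (u4 N) ≤ dist (u1 N) (u4 N) :=
    up_bound hv1 hv4 hv10 hv40 hv14 hN0
      hx1 hx4
      (by linarith) (by linarith)
  have B4 : dist (u3 N) (u4 N) ≤ dist t' (u3 N) + dist t' (u4 N) := by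
    have h := dist_triangle (u3 N) t' (u4 N)
    have := dist_comm (u3 N) t'
    linarith
  rw [dAB] at B1
  rw [dBC] at B2
  rw [dCD] at B4
  linarith


private lemma isRayFrom_of_geo {X : Type*} [MetricSpace X] {r : ℝ → X} {t : X}
    (hr : IsGeodesicRay r) (h0 : r 0 = t) : IsRayFrom t r :=
  ⟨h0, 1, one_pos, fun s hs u hu => hr s hs.1 u hu.1⟩

private def asympRel (T : SimplicialTreeSpace) :
    {r : ℝ → T.space // IsGeodesicRay r} → {r : ℝ → T.space // IsGeodesicRay r} → Prop :=
  fun r r' => Asymptotic r.1 r'.1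

private lemma asympRel_equiv (T : SimplicialTreeSpace) : Equivalence (asympRel T) := by
  constructor
  · intro a
    exact asymp_refl a.1
  · intro a b h
    exact asymp_symm h
  · intro a b c h h'
    exact asymp_trans h h'

private lemma mk_eq {T : SimplicialTreeSpace} {r r' : {r : ℝ → T.space // IsGeodesicRay r}} :
    T.atInfinity r = T.atInfinity r' ↔ Asymptotic r.1 r'.1 := by
  constructor
  · intro h
    have h2 : Relation.EqvGen (asympRel T) r r' := Quot.eq.mp h
    exact (Equivalence.eqvGen_iff (asympRel_equiv T)).mp h2
  · intro h
    exact Quot.sound h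

private lemma master {T : SimplicialTreeSpace}
    {a b c : T.Boundary} (hab : a ≠ b) (hbc : b ≠ c) (hac : a ≠ c) :
    ∃ (t : T.space) (ra rb rc : {r : ℝ → T.space // IsGeodesicRay r}),
      ra.1 0 = t ∧ rb.1 0 = t ∧ rc.1 0 = t ∧
      ¬ GermEq t ra.1 rb.1 ∧ ¬ GermEq t rb.1 rc.1 ∧ ¬ GermEq t ra.1 rc.1 ∧
      T.atInfinity ra = a ∧ T.atInfinity rb = b ∧ T.atInfinity rc = c := by
  obtain ⟨ra0, rfl⟩ := Quot.exists_rep a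
  obtain ⟨rb0, rfl⟩ := Quot.exists_rep b
  obtain ⟨rc0, rfl⟩ := Quot.exists_rep c
  obtain ⟨A, hAg, hA0, hAa⟩ := rebase (ra0.1 0) ra0.1 ra0.2
  obtain ⟨B, hBg, hB0, hBa⟩ := rebase (ra0.1 0) rb0.1 rb0.2
  obtain ⟨C, hCg, hC0, hCa⟩ := rebase (ra0.1 0) rc0.1 rc0.2
  have hAB : ¬ Asymptotic A B := fun h =>
    hab (mk_eq.mpr (asymp_trans (asymp_symm hAa) (asymp_trans h hBa)))
  have hAC : ¬ Asymptotic A C := fun h =>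
    hac (mk_eq.mpr (asymp_trans (asymp_symm hAa) (asymp_trans h hCa)))
  have hBC : ¬ Asymptotic B C := fun h =>
    hbc (mk_eq.mpr (asymp_trans (asymp_symm hBa) (asymp_trans h hCa)))
  obtain ⟨t, rx, ry, rz, gx, gy, gz, bx, byy, bz, ax, ay, az, n1, n2, n3⟩ :=
    tripod hAg hBg hCg hA0 hB0 hC0 hAB hAC hBC
  exact ⟨t, ⟨rx, gx⟩, ⟨ry, gy⟩, ⟨rz, gz⟩, bx, byy, bz, n1, n2, n3,
    Quot.sound (asymp_trans ax hAa), Quot.sound (asymp_trans ay hBa),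
    Quot.sound (asymp_trans az hCa)⟩

end TreeLemmas

/-- let `T` be a simplicial tree all of whose vertices have finite
valence `≥ 3`, equipped with a cyclic orientation (a cyclic order `or_x` on the germs
of rays at each point).  Then the induced order `o` on the boundary at infinity
`∂∞T` — defined via the centers of tripods — is a total cyclic order on `∂∞T`. -/
theorem induced_boundary_order_isTotalCyclicOrder
    (T : SimplicialTreeSpace)
    (ord : T.space → (ℝ → T.space) → (ℝ → T.space) → (ℝ → T.space) → ℤ)
    (hord : IsCyclicOrientation T ord)
    (o : T.Boundary → T.Boundary → T.Boundary → ℤ)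
    (ho : IsInducedBoundaryOrder T ord o) :
    IsTotalCyclicOrder o := by
  classical
  refine ⟨?_, ?_, ?_, ?_⟩
  · -- range
    intro x y z
    by_cases h : x = y ∨ y = z ∨ x = z
    · exact Or.inr (Or.inl (ho.zero_of_not_distinct x y z h))
    · push_neg at h
      obtain ⟨t, ra, rb, rc, b1, b2, b3, n1, n2, n3, e1, e2, e3⟩ := master h.1 h.2.1 h.2.2
      rw [← e1, ← e2, ← e3, ho.eq_ord t ra rb rc b1 b2 b3 n1 n2 n3]
      exact hord.range t ra.1 rb.1 rc.1
  · -- zero iff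
    intro x y z
    by_cases h : x = y ∨ y = z ∨ x = z
    · constructor
      · intro _ hcon
        rcases h with h | h | h
        exacts [hcon.1 h, hcon.2.1 h, hcon.2.2 h]
      · intro _
        exact ho.zero_of_not_distinct x y z h
    · push_neg at h
      obtain ⟨hxy, hyz, hxz⟩ := h
      constructor
      · intro h0
        obtain ⟨t, ra, rb, rc, b1, b2, b3, n1, n2, n3, e1, e2, e3⟩ := master hxy hyz hxz
        rw [← e1, ← e2, ← e3, ho.eq_ord t ra rb rc b1 b2 b3 n1 n2 n3] at h0
        rcases (hord.zero_iff t ra.1 rb.1 rc.1 (isRayFrom_of_geo ra.2 b1) (isRayFrom_of_geo rb.2 b2)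
          (isRayFrom_of_geo rc.2 b3)).mp h0 with hg | hg | hg
        exacts [absurd hg n1, absurd hg n2, absurd hg n3]
      · intro hcon
        exact absurd ⟨hxy, hyz, hxz⟩ hcon
  · -- cyclic
    intro x y z
    by_cases h : x = y ∨ y = z ∨ x = z
    · have h1 : o x y z = 0 := ho.zero_of_not_distinct x y z h
      have h2 : o y z x = 0 := ho.zero_of_not_distinct y z x (by tauto)
      have h3 : o x z y = 0 := ho.zero_of_not_distinct x z y (by tauto)
      rw [h1, h2, h3]
      simp
    · push_neg at h
      obtain ⟨hxy, hyz, hxz⟩ := h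
      obtain ⟨t, ra, rb, rc, b1, b2, b3, n1, n2, n3, e1, e2, e3⟩ := master hxy hyz hxz
      have E1 : o x y z = ord t ra.1 rb.1 rc.1 := by
        rw [← e1, ← e2, ← e3]
        exact ho.eq_ord t ra rb rc b1 b2 b3 n1 n2 n3
      have E2 : o y z x = ord t rb.1 rc.1 ra.1 := by
        rw [← e1, ← e2, ← e3]
        exact ho.eq_ord t rb rc ra b2 b3 b1 n2 (fun hh => n3 (germEq_symm hh))
          (fun hh => n1 (germEq_symm hh))
      have E3 : o x z y = ord t ra.1 rc.1 rb.1 := by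
        rw [← e1, ← e2, ← e3]
        exact ho.eq_ord t ra rc rb b1 b3 b2 n3 (fun hh => n2 (germEq_symm hh)) n1
      constructor
      · rw [E1, E2]
        exact (hord.cyclic t ra.1 rb.1 rc.1).1
      · rw [E1, E3]
        exact (hord.cyclic t ra.1 rb.1 rc.1).2
  · -- transitivity
    intro x y z w hxy hxz hxw hyz hyw hzw h1 h2
    obtain ⟨t, ra, rb, rc, b1, b2, b3, n12, n23, n13, e1, e2, e3⟩ := master hxy hyz hxz
    obtain ⟨rw0, hw0⟩ := Quot.exists_rep w
    obtain ⟨rd, hdg, hd0, hda⟩ := rebase t rw0.1 rw0.2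
    have ed : T.atInfinity ⟨rd, hdg⟩ = w := by
      rw [← hw0]
      exact Quot.sound hda
    by_cases g41 : GermEq t rd ra.1
    · -- bad case : use the tripod of (x, z, w) instead
      obtain ⟨t', sa, sc, sd, c1, c3, c4, m13, m34, m14, f1, f3, f4⟩ := master hxz hzw hxw
      obtain ⟨sb, hsbg, hsb0, hsba⟩ := rebase t' rb.1 rb.2
      have eb : T.atInfinity ⟨sb, hsbg⟩ = y := by
        rw [← e2]
        exact Quot.sound hsba
      by_cases g21 : GermEq t' sb sa.1
      · -- impossible configuration
        refine absurd rfl (fun _ : (0:ℤ) = 0 => ?_)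
        have av1 : Asymptotic ra.1 sa.1 := mk_eq.mp (e1.trans f1.symm)
        have av2 : Asymptotic rb.1 sb := asymp_symm hsba
        have av3 : Asymptotic rc.1 sc.1 := mk_eq.mp (e3.trans f3.symm)
        have av4 : Asymptotic rd sd.1 :=
          asymp_trans hda (mk_eq.mp (hw0.trans f4.symm))
        exact imposs ra.2 rb.2 rc.2 hdg sa.2 hsbg sc.2 sd.2
          b1 b2 b3 hd0 c1 hsb0 c3 c4 av1 av2 av3 av4
          n12 n13 n23 (germEq_symm g41) m13 m14 m34 (germEq_symm g21)
      · by_cases g23 : GermEq t' sb sc.1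
        · -- o x y w = o x z w = 1
          have E2 : o x z w = ord t' sa.1 sc.1 sd.1 := by
            rw [← f1, ← f3, ← f4]
            exact ho.eq_ord t' sa sc sd c1 c3 c4 m13 m34 m14
          have E3 : o x y w = ord t' sa.1 sb sd.1 := by
            rw [← f1, ← eb, ← f4]
            exact ho.eq_ord t' sa ⟨sb, hsbg⟩ sd c1 hsb0 c4
              (fun hh => g21 (germEq_symm hh))
              (fun hh => m34 (germEq_trans (germEq_symm g23) hh)) m14
          rw [E3, hord.germ_invariant t' sa.1 sb sd.1 sa.1 sc.1 sd.1 (germEq_refl t' sa.1) g23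
            (germEq_refl t' sd.1), ← E2]
          exact h2
        · by_cases g24 : GermEq t' sb sd.1
          · -- contradiction with h1
            have E1 : o x y z = ord t' sa.1 sb sc.1 := by
              rw [← f1, ← eb, ← f3]
              exact ho.eq_ord t' sa ⟨sb, hsbg⟩ sc c1 hsb0 c3
                (fun hh => g21 (germEq_symm hh)) g23 m13
            have E2 : o x z w = ord t' sa.1 sc.1 sd.1 := by
              rw [← f1, ← f3, ← f4]
              exact ho.eq_ord t' sa sc sd c1 c3 c4 m13 m34 m14
            have hsw : ord t' sa.1 sb sc.1 = ord t' sa.1 sd.1 sc.1 :=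
              hord.germ_invariant t' sa.1 sb sc.1 sa.1 sd.1 sc.1 (germEq_refl t' sa.1) g24
                (germEq_refl t' sc.1)
            have hcy : ord t' sa.1 sd.1 sc.1 = - ord t' sa.1 sc.1 sd.1 :=
              (hord.cyclic t' sa.1 sd.1 sc.1).2
            rw [E1, hsw, hcy] at h1
            rw [E2] at h2
            omega
          · -- common centre : use transitivity of ord
            have E1 : o x y z = ord t' sa.1 sb sc.1 := by
              rw [← f1, ← eb, ← f3]
              exact ho.eq_ord t' sa ⟨sb, hsbg⟩ sc c1 hsb0 c3
                (fun hh => g21 (germEq_symm hh)) g23 m13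
            have E2 : o x z w = ord t' sa.1 sc.1 sd.1 := by
              rw [← f1, ← f3, ← f4]
              exact ho.eq_ord t' sa sc sd c1 c3 c4 m13 m34 m14
            have E3 : o x y w = ord t' sa.1 sb sd.1 := by
              rw [← f1, ← eb, ← f4]
              exact ho.eq_ord t' sa ⟨sb, hsbg⟩ sd c1 hsb0 c4
                (fun hh => g21 (germEq_symm hh)) g24 m14
            rw [E3]
            rw [E1] at h1
            rw [E2] at h2
            exact hord.trans t' sa.1 sb sc.1 sd.1 (isRayFrom_of_geo sa.2 c1)
              (isRayFrom_of_geo hsbg hsb0) (isRayFrom_of_geo sc.2 c3)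
              (isRayFrom_of_geo sd.2 c4)
              (fun hh => g21 (germEq_symm hh)) m13 m14 g23 g24 m34 h1 h2
    · by_cases g43 : GermEq t rd rc.1
      · -- o x y w = o x y z = 1
        have E1 : o x y z = ord t ra.1 rb.1 rc.1 := by
          rw [← e1, ← e2, ← e3]
          exact ho.eq_ord t ra rb rc b1 b2 b3 n12 n23 n13
        have E3 : o x y w = ord t ra.1 rb.1 rd := by
          rw [← e1, ← e2, ← ed]
          exact ho.eq_ord t ra rb ⟨rd, hdg⟩ b1 b2 hd0 n12
            (fun hh => n23 (germEq_trans hh g43)) (fun hh => g41 (germEq_symm hh))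
        rw [E3, hord.germ_invariant t ra.1 rb.1 rd ra.1 rb.1 rc.1 (germEq_refl t ra.1)
          (germEq_refl t rb.1) g43, ← E1]
        exact h1
      · by_cases g42 : GermEq t rd rb.1
        · -- contradiction with h2
          have E1 : o x y z = ord t ra.1 rb.1 rc.1 := by
            rw [← e1, ← e2, ← e3]
            exact ho.eq_ord t ra rb rc b1 b2 b3 n12 n23 n13
          have E2 : o x z w = ord t ra.1 rc.1 rd := by
            rw [← e1, ← e3, ← ed]
            exact ho.eq_ord t ra rc ⟨rd, hdg⟩ b1 b3 hd0 n13
              (fun hh => n23 (germEq_symm (germEq_trans hh g42)))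
              (fun hh => g41 (germEq_symm hh))
          have hsw : ord t ra.1 rc.1 rd = ord t ra.1 rc.1 rb.1 :=
            hord.germ_invariant t ra.1 rc.1 rd ra.1 rc.1 rb.1 (germEq_refl t ra.1)
              (germEq_refl t rc.1) g42
          have hcy : ord t ra.1 rc.1 rb.1 = - ord t ra.1 rb.1 rc.1 :=
            (hord.cyclic t ra.1 rc.1 rb.1).2
          rw [E2, hsw, hcy] at h2
          rw [E1] at h1
          omega
        · -- common centre at t
          have E1 : o x y z = ord t ra.1 rb.1 rc.1 := by
            rw [← e1, ← e2, ← e3]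
            exact ho.eq_ord t ra rb rc b1 b2 b3 n12 n23 n13
          have E2 : o x z w = ord t ra.1 rc.1 rd := by
            rw [← e1, ← e3, ← ed]
            exact ho.eq_ord t ra rc ⟨rd, hdg⟩ b1 b3 hd0 n13
              (fun hh => g43 (germEq_symm hh)) (fun hh => g41 (germEq_symm hh))
          have E3 : o x y w = ord t ra.1 rb.1 rd := by
            rw [← e1, ← e2, ← ed]
            exact ho.eq_ord t ra rb ⟨rd, hdg⟩ b1 b2 hd0 n12
              (fun hh => g42 (germEq_symm hh)) (fun hh => g41 (germEq_symm hh))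
          rw [E3]
          rw [E1] at h1
          rw [E2] at h2
          exact hord.trans t ra.1 rb.1 rc.1 rd (isRayFrom_of_geo ra.2 b1)
            (isRayFrom_of_geo rb.2 b2) (isRayFrom_of_geo rc.2 b3)
            (isRayFrom_of_geo hdg hd0) n12 n13 (fun hh => g41 (germEq_symm hh))
            n23 (fun hh => g42 (germEq_symm hh)) (fun hh => g43 (germEq_symm hh)) h1 h2
end
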